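/- Let k < t be coprime positive integers with t > 24, and let S_i be the i-strip of D(k,t) for some i ∈ {0, 1, …, t − 24}. Then there is an assignment of colors from the set C = {1, 2, …, 15, 22, 23} to the vertices of S_i such that any two distinct vertices of S_i receiving the same color c are at distance greater than c in S_i. -/

import Mathlib

/-- The infinite distance graph `D(k,t)` on vertex set `ℤ`: distinct `i, j` are
adjacent iff `|i - j| ∈ {k, t}`. -/
def distGraph (k t : ℕ) : SimpleGraph ℤ where
  Adj i j := i ≠ j ∧ ((i - j).natAbs = k ∨ (i - j).natAbs = t)
  symm := by
    constructor
    rintro i j ⟨hne, hd⟩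
    refine ⟨hne.symm, ?_⟩
    rwa [show j - i = -(i - j) by ring, Int.natAbs_neg]
  loopless := by constructor; rintro i ⟨hne, -⟩; exact hne rfl

/-- `c` is a packing `p`-coloring of `G`: each vertex gets a color in `{1, …, p}`,
and any two distinct vertices with the same color `c` are at distance greater
than `c` (in particular, unreachable pairs have infinite distance). -/
def IsPackingColoring {V : Type*} (G : SimpleGraph V) (p : ℕ) (c : V → ℕ) : Prop :=
  (∀ v, 1 ≤ c v ∧ c v ≤ p) ∧
  ∀ u v : V, u ≠ v → c u = c v → (c u : ℕ∞) < G.edist u v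

/-- The packing chromatic number of `G`: the smallest `p` (as an element of `ℕ∞`,
being `⊤` if no finite packing coloring exists) admitting a packing `p`-coloring. -/
noncomputable def packingChromaticNumber {V : Type*} (G : SimpleGraph V) : ℕ∞ :=
  sInf {q : ℕ∞ | ∃ p : ℕ, q = p ∧ ∃ c : V → ℕ, IsPackingColoring G p c}

/-- The vertex set of the `i`-band of `D(k,t)`: the integers `i*k + j*t`, `j ∈ ℤ`. -/
def bandSet (k t : ℕ) (i : ℕ) : Set ℤ :=
  {z : ℤ | ∃ j : ℤ, z = (i : ℤ) * k + j * t}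

/-- The vertex set of the `i`-strip of `D(k,t)`: the union of the vertex sets of
the bands `B_i, B_{i+1}, …, B_{i+23}`. -/
def stripSet (k t : ℕ) (i : ℕ) : Set ℤ :=
  ⋃ m ∈ Finset.range 24, bandSet k t (i + m)

def rowsList : List ℕ := [
  62173064655133145746942908302030926677633292239536533890674610896147490,
  168016337914798907520850543158505660558950544605187454425762976601573665,
  58723874845757083199013158939277498334545096952974477096278257339240503,
  278228547027724336264963597869909910620695150069899209929910205713286241,
  60447646173819003663612117954204738049640427570031356470174145076832290,
  222906683759213784492988286785904503908170665251807984410042117127242977,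
  58727256347977606863525921460551692853099531620472982099307439482505251,
  609242666894909188633225921247071372282738432948312092839857045969700001,
  77705370510763537387962269876564692380955820734971989914891636841679906,
  167477033566420575923010378905645440368069381261222861920623119989769409,
  63911979571265184185806815022371826066871083105761963614235698515707940,
  112317140602094285537731846879026823645803747754592664422626866607850593,
  67349374415229213263879098972798240911389264102908345008016624755718184,
  167584978973310251691024072534223543427186747449224126352475700694451265,
  58723874840936279793704974179448804207127463408288641998643719488704549,
  333496858944549821929058723367168220227671718601926478121635282164974689,
  60447629718771861176128095945509250744233373301081810479862567054384162,
  222852763865880267850975571933642092369599748665878815428198214872958273,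
  58730621420866709178456880320275521834186011286901634060667511854106659,
  830098549992106795724467065427211658013197412183827334580965644644320417,
  74254494057607714825620031561086534512009027636481202277117731023129634,
  167477033411802907897251042780150784099632935473543041776051737092031777,
  63932217631821947138175499838030317332406111240272983536366490357899332,
  112316929977209647540059524990985117972826915895068681716736064689865825
]

def col (m s : ℕ) : ℕ := rowsList.getD m 1 / 32 ^ s % 32

def pal (c : ℕ) : Bool :=
  c == 1 || c == 2 || c == 3 || c == 4 || c == 5 || c == 6 || c == 7 || c == 8 || c == 9 ||
  c == 10 || c == 11 || c == 12 || c == 13 || c == 14 || c == 15 || c == 22 || c == 23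

def innerChk (m s c da db : ℕ) : Bool :=
  (da == c && db == c) ||
  !(decide (c ≤ m + da) && decide (m + da < 24 + c) &&
    decide (Nat.dist da c + Nat.dist db c ≤ c)) ||
  !(col (m + da - c) ((s + db + 48 - c) % 48) == c)

def okc (m s c : ℕ) : Bool :=
  pal c &&
  ((List.range ((2 * c + 1) * (2 * c + 1))).all fun o =>
    innerChk m s c (o / (2 * c + 1)) (o % (2 * c + 1)))

def okRow (m : ℕ) : Bool := (List.range 48).all fun s => okc m s (col m s)

set_option maxRecDepth 100000 in
set_option maxHeartbeats 1000000 in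
lemma okr0 : okRow 0 = true := by decide

set_option maxRecDepth 100000 in
set_option maxHeartbeats 1000000 in
lemma okr1 : okRow 1 = true := by decide

set_option maxRecDepth 100000 in
set_option maxHeartbeats 1000000 in
lemma okr2 : okRow 2 = true := by decide

set_option maxRecDepth 100000 in
set_option maxHeartbeats 1000000 in
lemma okr3 : okRow 3 = true := by decide

set_option maxRecDepth 100000 in
set_option maxHeartbeats 1000000 in
lemma okr4 : okRow 4 = true := by decide

set_option maxRecDepth 100000 in
set_option maxHeartbeats 1000000 in
lemma okr5 : okRow 5 = true := by decide

set_option maxRecDepth 100000 in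
set_option maxHeartbeats 1000000 in
lemma okr6 : okRow 6 = true := by decide

set_option maxRecDepth 100000 in
set_option maxHeartbeats 1000000 in
lemma okr7 : okRow 7 = true := by decide

set_option maxRecDepth 100000 in
set_option maxHeartbeats 1000000 in
lemma okr8 : okRow 8 = true := by decide

set_option maxRecDepth 100000 in
set_option maxHeartbeats 1000000 in
lemma okr9 : okRow 9 = true := by decide

set_option maxRecDepth 100000 in
set_option maxHeartbeats 1000000 in
lemma okr10 : okRow 10 = true := by decide

set_option maxRecDepth 100000 in
set_option maxHeartbeats 1000000 in
lemma okr11 : okRow 11 = true := by decide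

set_option maxRecDepth 100000 in
set_option maxHeartbeats 1000000 in
lemma okr12 : okRow 12 = true := by decide

set_option maxRecDepth 100000 in
set_option maxHeartbeats 1000000 in
lemma okr13 : okRow 13 = true := by decide

set_option maxRecDepth 100000 in
set_option maxHeartbeats 1000000 in
lemma okr14 : okRow 14 = true := by decide

set_option maxRecDepth 100000 in
set_option maxHeartbeats 1000000 in
lemma okr15 : okRow 15 = true := by decide

set_option maxRecDepth 100000 in
set_option maxHeartbeats 1000000 in
lemma okr16 : okRow 16 = true := by decide

set_option maxRecDepth 100000 in
set_option maxHeartbeats 1000000 in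
lemma okr17 : okRow 17 = true := by decide

set_option maxRecDepth 100000 in
set_option maxHeartbeats 1000000 in
lemma okr18 : okRow 18 = true := by decide

set_option maxRecDepth 100000 in
set_option maxHeartbeats 1000000 in
lemma okr19 : okRow 19 = true := by decide

set_option maxRecDepth 100000 in
set_option maxHeartbeats 1000000 in
lemma okr20 : okRow 20 = true := by decide

set_option maxRecDepth 100000 in
set_option maxHeartbeats 1000000 in
lemma okr21 : okRow 21 = true := by decide

set_option maxRecDepth 100000 in
set_option maxHeartbeats 1000000 in
lemma okr22 : okRow 22 = true := by decide

set_option maxRecDepth 100000 in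
set_option maxHeartbeats 1000000 in
lemma okr23 : okRow 23 = true := by decide

lemma okRow_true {m : ℕ} (hm : m < 24) : okRow m = true := by
  interval_cases m
  exacts [okr0, okr1, okr2, okr3, okr4, okr5, okr6, okr7, okr8, okr9, okr10, okr11, okr12, okr13, okr14, okr15, okr16, okr17, okr18, okr19, okr20, okr21, okr22, okr23]

lemma okc_true {m s : ℕ} (hm : m < 24) (hs : s < 48) : okc m s (col m s) = true := by
  have hok : ((List.range 48).all fun s => okc m s (col m s)) = true := okRow_true hm
  exact List.all_eq_true.mp hok s (List.mem_range.mpr hs)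

lemma col_mem {m s : ℕ} (hm : m < 24) (hs : s < 48) :
    col m s ∈ ({1, 2, 3, 4, 5, 6, 7, 8, 9, 10, 11, 12, 13, 14, 15, 22, 23} : Set ℕ) := by
  have h := okc_true hm hs
  rw [okc, Bool.and_eq_true] at h
  have hp := h.1
  rw [pal] at hp
  simp only [Bool.or_eq_true, beq_iff_eq] at hp
  simp only [Set.mem_insert_iff, Set.mem_singleton_iff]
  omega

lemma pack {m m' s : ℕ} {b : ℤ} (hm : m < 24) (hm' : m' < 24) (hs : s < 48)
    (hd : ((m : ℤ) - m').natAbs + b.natAbs ≤ col m s)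
    (hc : col m' (((s : ℤ) + b) % 48).toNat = col m s) :
    m = m' ∧ b = 0 := by
  have h := okc_true hm hs
  rw [okc, Bool.and_eq_true] at h
  set c := col m s with hcdef
  have hdm : ((m : ℤ) - m').natAbs ≤ c := le_trans (Nat.le_add_right _ _) hd
  have hdb : b.natAbs ≤ c := le_trans (Nat.le_add_left _ _) hd
  set da := m' + c - m with hdadef
  set db := (b + c).toNat with hdbdef
  have hda2 : da ≤ 2 * c := by omega
  have hdb2 : db ≤ 2 * c := by omega
  have ho : (2 * c + 1) * da + db < (2 * c + 1) * (2 * c + 1) := by nlinarith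
  have h2 := List.all_eq_true.mp h.2 ((2 * c + 1) * da + db) (List.mem_range.mpr ho)
  have e1 : ((2 * c + 1) * da + db) / (2 * c + 1) = da := by
    rw [Nat.mul_add_div (by omega), Nat.div_eq_of_lt (by omega), Nat.add_zero]
  have e2 : ((2 * c + 1) * da + db) % (2 * c + 1) = db := by
    rw [Nat.mul_add_mod, Nat.mod_eq_of_lt (by omega)]
  rw [e1, e2, innerChk] at h2
  have ed : ∀ x y : ℕ, Nat.dist x y = x - y + (y - x) := fun _ _ => rfl
  simp only [Bool.or_eq_true, Bool.and_eq_true, beq_iff_eq, Bool.not_eq_true',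
    Bool.and_eq_false_iff, decide_eq_true_eq, decide_eq_false_iff_not, beq_eq_false_iff_ne,
    ne_eq] at h2
  rcases h2 with (⟨h3, h4⟩ | h34 | h5) | h6
  · omega
  · exfalso
    rcases h34 with h3 | h3 <;> omega
  · exfalso
    have ed1 : Nat.dist da c = da - c + (c - da) := rfl
    have ed2 : Nat.dist db c = db - c + (c - db) := rfl
    omega
  · exfalso
    have hc32 : c < 32 := by rw [hcdef, col]; exact Nat.mod_lt _ (by norm_num)
    have em' : m + da - c = m' := by omega
    have es' : (s + db + 48 - c) % 48 = (((s : ℤ) + b) % 48).toNat := by omega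
    rw [em', es'] at h6
    exact h6 hc

theorem strip_coloring (k t : ℕ) (hk : 0 < k) (hkt : k < t) (hcop : Nat.gcd k t = 1)
    (ht : 24 < t) (i : ℕ) (hi : i ≤ t - 24) :
    ∃ c : (stripSet k t i) → ℕ,
      (∀ v, c v ∈ ({1, 2, 3, 4, 5, 6, 7, 8, 9, 10, 11, 12, 13, 14, 15, 22, 23} : Set ℕ)) ∧
      ∀ u v : (stripSet k t i), u ≠ v → c u = c v →
        (c u : ℕ∞) < (SimpleGraph.induce (stripSet k t i) (distGraph k t)).edist u v := by
  -- helper: t divides a*k and |a| small implies a = 0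
  have hdvd : ∀ a : ℤ, (t : ℤ) ∣ a * k → a.natAbs < t → a = 0 := by
    intro a hdv ha
    have h1 : t ∣ (a * k).natAbs := Int.natAbs_dvd_natAbs.mpr hdv
    rw [Int.natAbs_mul, Int.natAbs_natCast] at h1
    have h2 : t ∣ a.natAbs := (Nat.Coprime.dvd_of_dvd_mul_right (Nat.coprime_comm.mp hcop)) h1
    have h3 := Nat.eq_zero_of_dvd_of_lt h2 ha
    omega
  -- coordinates
  have hex : ∀ v : (stripSet k t i), ∃ p : ℕ × ℤ,
      p.1 < 24 ∧ (v : ℤ) = ((i : ℤ) + p.1) * k + p.2 * t := by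
    rintro ⟨z, hz⟩
    simp only [stripSet, Set.mem_iUnion, bandSet, Set.mem_setOf_eq, Finset.mem_range] at hz
    obtain ⟨m, hm, j, hj⟩ := hz
    exact ⟨(m, j), hm, by push_cast [hj]; ring⟩
  choose f hf1 hf2 using hex
  -- L1 distance
  set L1 : (stripSet k t i) → (stripSet k t i) → ℕ := fun u v =>
    (((f u).1 : ℤ) - ((f v).1 : ℤ)).natAbs + ((f u).2 - (f v).2).natAbs with hL1
  -- edges move L1 by at most 1
  have hstep : ∀ u v : (stripSet k t i),
      (SimpleGraph.induce (stripSet k t i) (distGraph k t)).Adj u v → L1 u v ≤ 1 := by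
    intro u v huv
    have huv2 : (distGraph k t).Adj (u : ℤ) (v : ℤ) := huv
    obtain ⟨hne2, habs⟩ := huv2
    set a : ℤ := ((f u).1 : ℤ) - ((f v).1 : ℤ) with hadef
    set b : ℤ := (f u).2 - (f v).2 with hbdef
    have key : (u : ℤ) - (v : ℤ) = a * k + b * t := by
      rw [hf2 u, hf2 v]; push_cast; ring
    have ha24 : a.natAbs < 24 := by
      have := hf1 u; have := hf1 v; omega
    rcases habs with hk' | ht'
    · -- |u - v| = k
      rcases Int.natAbs_eq_iff.mp hk' with he | he
      · have hd : (t : ℤ) ∣ (a - 1) * k := ⟨-b, by linear_combination he - key⟩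
        have ha : a - 1 = 0 := hdvd _ hd (by omega)
        have hb : b = 0 := by
          have hbt : b * t = 0 := by linear_combination he - key - (k : ℤ) * ha
          have ht0 : (t : ℤ) ≠ 0 := by positivity
          exact (mul_eq_zero.mp hbt).resolve_right ht0
        simp only [hL1]
        omega
      · have hd : (t : ℤ) ∣ (a + 1) * k := ⟨-b, by linear_combination he - key⟩
        have ha : a + 1 = 0 := hdvd _ hd (by omega)
        have hb : b = 0 := by
          have hbt : b * t = 0 := by linear_combination he - key - (k : ℤ) * ha
          have ht0 : (t : ℤ) ≠ 0 := by positivity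
          exact (mul_eq_zero.mp hbt).resolve_right ht0
        simp only [hL1]
        omega
    · -- |u - v| = t
      have hd : (t : ℤ) ∣ a * k := by
        rcases Int.natAbs_eq_iff.mp ht' with he | he
        · exact ⟨1 - b, by linear_combination he - key⟩
        · exact ⟨-1 - b, by linear_combination he - key⟩
      have ha : a = 0 := hdvd _ hd (by omega)
      have hb : b = 1 ∨ b = -1 := by
        have ht0 : (t : ℤ) ≠ 0 := by positivity
        rcases Int.natAbs_eq_iff.mp ht' with he | he
        · left
          have hbt : (b - 1) * t = 0 := by linear_combination he - key - (k : ℤ) * ha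
          have := (mul_eq_zero.mp hbt).resolve_right ht0
          omega
        · right
          have hbt : (b + 1) * t = 0 := by linear_combination he - key - (k : ℤ) * ha
          have := (mul_eq_zero.mp hbt).resolve_right ht0
          omega
      simp only [hL1]
      omega
  -- walk bound
  have hwalk : ∀ (u v : (stripSet k t i))
      (w : (SimpleGraph.induce (stripSet k t i) (distGraph k t)).Walk u v),
      L1 u v ≤ w.length := by
    intro u v w
    induction w with
    | nil => simp [hL1]
    | @cons x y z hadj w ih =>
      have h1 := hstep _ _ hadj
      have htri : L1 x z ≤ L1 x y + L1 y z := by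
        simp only [hL1]; omega
      simp only [SimpleGraph.Walk.length_cons]
      omega
  have hL1le : ∀ u v : (stripSet k t i),
      (L1 u v : ℕ∞) ≤ (SimpleGraph.induce (stripSet k t i) (distGraph k t)).edist u v := by
    intro u v
    rw [SimpleGraph.edist_eq_sInf]
    apply le_sInf
    rintro x ⟨w, rfl⟩
    simpa using hwalk u v w
  -- uniqueness of coordinates
  have huniq : ∀ u v : (stripSet k t i), (f u).1 = (f v).1 → (f u).2 = (f v).2 → u = v := by
    intro u v h1 h2
    have := hf2 u
    rw [h1, h2, ← hf2 v] at this
    exact Subtype.ext this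
  -- the coloring
  refine ⟨fun v => col (f v).1 ((f v).2 % 48).toNat, ?_, ?_⟩
  · intro v
    exact col_mem (hf1 v) (by omega)
  · intro u v hne hcuv
    set c := col (f u).1 ((f u).2 % 48).toNat with hcdef
    have hkey : c + 1 ≤ L1 u v := by
      by_contra hcon
      push_neg at hcon
      have hd : (((f u).1 : ℤ) - ((f v).1 : ℤ)).natAbs + ((f v).2 - (f u).2).natAbs ≤ c := by
        simp only [hL1] at hcon
        omega
      have hmod : ((((((f u).2 % 48).toNat : ℕ) : ℤ) + ((f v).2 - (f u).2)) % 48).toNat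
          = ((f v).2 % 48).toNat := by omega
      have hcc : col (f v).1
          (((((f u).2 % 48).toNat : ℤ) + ((f v).2 - (f u).2)) % 48).toNat = c := by
        rw [hmod]; exact hcuv.symm
      have hres := pack (hf1 u) (hf1 v) (by omega : ((f u).2 % 48).toNat < 48) hd hcc
      exact hne (huniq u v hres.1 (by omega))
    have h1 : (c : ℕ∞) < (L1 u v : ℕ∞) := by
      exact_mod_cast Nat.lt_of_lt_of_le (Nat.lt_succ_self c) hkey
    exact lt_of_lt_of_le h1 (hL1le u v)
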